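/- For a symmetric numerical semigroup S(d1,d2,d3) minimally generated by three elements, the Frobenius number satisfies F(d1,d2,d3) ≥ 2*sqrt(d1*d2*d3) - (d1 + d2 + d3). -/

import Mathlib

private lemma canon_rep (d1 d2 m m' : ℕ) (hm : 0 < m) (hmd : m * d2 = m' * d1) :
    ∀ b a : ℕ, ∃ a' b', b' < m ∧ a' * d1 + b' * d2 = a * d1 + b * d2 := by
  intro b
  induction b using Nat.strong_induction_on with
  | _ b ih =>
    intro a
    rcases lt_or_ge b m with hb | hb
    · exact ⟨a, b, hb, rfl⟩
    · obtain ⟨a', b', h1, h2⟩ := ih (b - m) (by omega) (a + m')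
      refine ⟨a', b', h1, ?_⟩
      rw [h2]
      have e : m' * d1 = m * d2 := hmd.symm
      have hbb : m + (b - m) = b := by omega
      calc (a + m') * d1 + (b - m) * d2
          = a * d1 + m' * d1 + (b - m) * d2 := by ring
        _ = a * d1 + m * d2 + (b - m) * d2 := by rw [e]
        _ = a * d1 + (m + (b - m)) * d2 := by ring
        _ = a * d1 + b * d2 := by rw [hbb]

open Classical in
private noncomputable def cpair (d1 d2 m n : ℕ) : ℕ × ℕ :=
  if h : ∃ p : ℕ × ℕ, p.2 < m ∧ n = p.1 * d1 + p.2 * d2 then h.choose else (0, 0)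

open Classical in
private lemma cpair_spec (d1 d2 m n : ℕ)
    (h : ∃ p : ℕ × ℕ, p.2 < m ∧ n = p.1 * d1 + p.2 * d2) :
    (cpair d1 d2 m n).2 < m ∧ n = (cpair d1 d2 m n).1 * d1 + (cpair d1 d2 m n).2 * d2 := by
  rw [cpair, dif_pos h]; exact h.choose_spec

private lemma count_bound (d1 d2 m m' A0 B0 MM : ℕ) (hd1 : 0 < d1) (hm : 0 < m)
    (hmd : m * d2 = m' * d1) (hcop : Nat.Coprime m m') (hB0 : B0 < m)
    (hMcan : MM = A0 * d1 + B0 * d2) (W : Finset ℕ)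
    (hW : ∀ n ∈ W, n ≤ MM ∧ (∃ a b : ℕ, n = a * d1 + b * d2) ∧
      (∃ a b : ℕ, MM - n = a * d1 + b * d2)) :
    W.card ≤ (A0 + 1) * (B0 + 1) + (A0 + 1 - m') * (m - (B0 + 1)) := by
  classical
  set E1 : Finset (ℕ × ℕ) := Finset.range (A0+1) ×ˢ Finset.range (B0+1) with hE1
  set E2 : Finset (ℕ × ℕ) := Finset.range (A0+1-m') ×ˢ Finset.Ico (B0+1) m with hE2
  have hdisj : Disjoint E1 E2 := by
    rw [Finset.disjoint_left]
    rintro ⟨x, y⟩ hp1 hp2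
    simp only [hE1, hE2, Finset.mem_product, Finset.mem_range, Finset.mem_Ico] at hp1 hp2
    omega
  have hcard : (E1 ∪ E2).card = (A0 + 1) * (B0 + 1) + (A0 + 1 - m') * (m - (B0 + 1)) := by
    rw [Finset.card_union_of_disjoint hdisj]
    simp [hE1, hE2, Nat.card_Ico]
  rw [← hcard]
  have hspec : ∀ n ∈ W, (cpair d1 d2 m n).2 < m ∧
      n = (cpair d1 d2 m n).1 * d1 + (cpair d1 d2 m n).2 * d2 := by
    intro n hn
    obtain ⟨hnM, ⟨a0, b0, hab0⟩, -⟩ := hW n hn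
    apply cpair_spec
    obtain ⟨a, b, hb, he⟩ := canon_rep d1 d2 m m' hm hmd b0 a0
    exact ⟨(a, b), hb, by rw [hab0, ← he]⟩
  apply Finset.card_le_card_of_injOn (fun n => cpair d1 d2 m n)
  · intro n hn
    obtain ⟨hnM, -, ⟨a', b', hmn⟩⟩ := hW n hn
    obtain ⟨hbm, hn2⟩ := hspec n hn
    set a := (cpair d1 d2 m n).1 with ha
    set b := (cpair d1 d2 m n).2 with hb
    have hkey : a * d1 + b * d2 + (a' * d1 + b' * d2) = A0 * d1 + B0 * d2 := by omega
    have hzkey : ((a:ℤ) * d1 + (b:ℤ) * d2) + ((a':ℤ) * d1 + (b':ℤ) * d2)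
        = (A0:ℤ) * d1 + (B0:ℤ) * d2 := by exact_mod_cast hkey
    have hmdz : (m:ℤ) * d2 = (m':ℤ) * d1 := by exact_mod_cast hmd
    have hz : ((b:ℤ) + b' - B0) * d2 = ((A0:ℤ) - a - a') * d1 := by linear_combination hzkey
    have hzz : ((b:ℤ) + b' - B0) * m' = ((A0:ℤ) - a - a') * m := by
      have hd1z : (d1:ℤ) ≠ 0 := by exact_mod_cast hd1.ne'
      apply mul_right_cancel₀ hd1z
      linear_combination (m:ℤ) * hz - ((b:ℤ) + b' - B0) * hmdz
    have hcopz : IsCoprime (m:ℤ) (m':ℤ) := by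
      rw [Nat.isCoprime_iff_coprime]; exact hcop
    have hdvd : (m:ℤ) ∣ ((b:ℤ) + b' - B0) :=
      hcopz.dvd_of_dvd_mul_right ⟨(A0:ℤ) - a - a', by linarith⟩
    obtain ⟨k, hk⟩ := hdvd
    have hmz : (0:ℤ) < m := by exact_mod_cast hm
    have hB0z : (B0:ℤ) < m := by exact_mod_cast hB0
    have hk0 : 0 ≤ k := by nlinarith [hk]
    have hkAk : (A0:ℤ) - a - a' = k * m' := by
      apply mul_left_cancel₀ hmz.ne'
      linear_combination (m':ℤ) * hk - hzz
    simp only [Finset.mem_coe, Finset.mem_union, hE1, hE2, Finset.mem_product, Finset.mem_range,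
      Finset.mem_Ico]
    rcases hk0.eq_or_lt with hke | hke
    · -- k = 0
      have e0 : (b:ℤ) + b' - B0 = 0 := by rw [hk, ← hke]; ring
      have e1 : (A0:ℤ) - a - a' = 0 := by rw [hkAk, ← hke]; ring
      left; constructor <;> omega
    · -- k ≥ 1
      have hm'z : (0:ℤ) ≤ m' := by positivity
      have hmm : (m':ℤ) ≤ k * m' := le_mul_of_one_le_left hm'z (by omega)
      have haA : (a:ℤ) + m' ≤ A0 := by
        have h0a' : (0:ℤ) ≤ a' := by positivity
        linarith
      have haN : a + m' ≤ A0 := by exact_mod_cast haA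
      rcases le_or_gt b B0 with hbB | hbB
      · left; constructor <;> omega
      · right; refine ⟨by omega, by omega, hbm⟩
  · intro n1 h1 n2 h2 heq
    have e1 := (hspec n1 h1).2
    have e2 := (hspec n2 h2).2
    simp only at heq
    rw [e1, e2, heq]


private lemma arith_core (d1 d2 d3 g m m' A0 B0 F : ℕ)
    (hg : 0 < g) (hm : 0 < m)
    (hd1 : g * m = d1) (hd2 : g * m' = d2)
    (hB0 : B0 < m)
    (hM : F + d3 = A0 * d1 + B0 * d2)
    (hd3 : d3 ≤ (A0 + 1) * (B0 + 1) + (A0 + 1 - m') * (m - (B0 + 1))) :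
    4 * (d1 * d2 * d3) ≤ (F + d1 + d2 + d3) ^ 2 := by
  subst hd1 hd2
  have hsum : F + g * m + g * m' + d3 = (A0 + 1) * (g * m) + (B0 + 1) * (g * m') := by
    rw [add_mul, add_mul, one_mul, one_mul]; omega
  rcases le_or_gt (A0 + 1) m' with hc | hc
  · have h2 : A0 + 1 - m' = 0 := by omega
    rw [h2] at hd3
    simp at hd3
    zify at hd3 hsum ⊢
    rw [hsum]
    nlinarith [sq_nonneg (((A0:ℤ) + 1) * (g * m) - ((B0:ℤ) + 1) * (g * m')),
      mul_le_mul_of_nonneg_left hd3 (show (0:ℤ) ≤ 4 * ((g*m) * (g*m')) by positivity)]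
  · have hA : m' ≤ A0 + 1 := by omega
    have hB : B0 + 1 ≤ m := by omega
    zify [hA, hB] at hd3
    zify at hsum ⊢
    rw [hsum]
    nlinarith [sq_nonneg ((g:ℤ) * (m * (A0 + 1) + m' * (B0 + 1) - 2 * m * m')),
      mul_le_mul_of_nonneg_left hd3 (show (0:ℤ) ≤ 4 * ((g:ℤ)*m * (g*m')) by positivity),
      sq_nonneg ((g:ℤ)), mul_pos (show (0:ℤ) < g by exact_mod_cast hg) (show (0:ℤ) < m by exact_mod_cast hm)]


theorem stmt18 (d1 d2 d3 : ℕ)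
    (hd1 : 1 < d1) (h12 : d1 < d2) (h23 : d2 < d3)
    (hgcd : Nat.gcd d1 (Nat.gcd d2 d3) = 1)
    (hmin1 : ¬ ∃ b c : ℕ, d1 = b * d2 + c * d3)
    (hmin2 : ¬ ∃ a c : ℕ, d2 = a * d1 + c * d3)
    (hmin3 : ¬ ∃ a b : ℕ, d3 = a * d1 + b * d2)
    (F : ℕ)
    (hF : IsGreatest {n : ℕ | ¬ ∃ a b c : ℕ, n = a * d1 + b * d2 + c * d3} F)
    (hsym : ∀ s : ℤ,
      (∃ a b c : ℕ, s = a * d1 + b * d2 + c * d3) ↔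
        ¬ ∃ a b c : ℕ, (F : ℤ) - s = a * d1 + b * d2 + c * d3) :
    2 * Real.sqrt ((d1 : ℝ) * d2 * d3) - ((d1 : ℝ) + d2 + d3) ≤ (F : ℝ) := by
  classical
  have hd3pos : 0 < d3 := by omega
  have hFnr : ¬ ∃ a b c : ℕ, F = a * d1 + b * d2 + c * d3 := hF.1
  have hrep_gt : ∀ n : ℕ, F < n → ∃ a b c : ℕ, n = a * d1 + b * d2 + c * d3 := by
    intro n hn
    by_contra h
    exact absurd (hF.2 (show n ∈ {n : ℕ | ¬ ∃ a b c : ℕ, n = a * d1 + b * d2 + c * d3} from h))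
      (by omega)
  -- Apery machinery
  have hne : ∀ r : ℕ, ∃ n : ℕ, (∃ a b c : ℕ, n = a * d1 + b * d2 + c * d3) ∧ n % d3 = r % d3 := by
    intro r
    refine ⟨(F + 1) * d3 + r, hrep_gt _ ?_, by rw [Nat.add_comm]; exact Nat.add_mul_mod_self_right r (F+1) d3⟩
    have : F + 1 ≤ (F + 1) * d3 := Nat.le_mul_of_pos_right _ hd3pos
    omega
  set w : ℕ → ℕ := fun r => Nat.find (hne r) with hw
  have hw_rep : ∀ r, ∃ a b c : ℕ, w r = a * d1 + b * d2 + c * d3 := fun r => (Nat.find_spec (hne r)).1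
  have hw_mod : ∀ r, w r % d3 = r % d3 := fun r => (Nat.find_spec (hne r)).2
  have hw_min : ∀ r k, k < w r → ¬((∃ a b c : ℕ, k = a * d1 + b * d2 + c * d3) ∧ k % d3 = r % d3) :=
    fun r k hk => Nat.find_min (hne r) hk
  have hw_sub : ∀ r, d3 ≤ w r → ¬ ∃ a b c : ℕ, w r - d3 = a * d1 + b * d2 + c * d3 := by
    intro r h hrep
    refine hw_min r (w r - d3) (by omega) ⟨hrep, ?_⟩
    rw [← hw_mod r]
    have e : w r - d3 + d3 = w r := by omega
    conv_rhs => rw [← e]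
    rw [Nat.add_mod_right]
  have hw_le : ∀ r, w r ≤ F + d3 := by
    intro r
    rcases le_or_gt d3 (w r) with h | h
    · have := hF.2 (show w r - d3 ∈ {n : ℕ | ¬ ∃ a b c : ℕ, n = a * d1 + b * d2 + c * d3} from
        hw_sub r h)
      omega
    · omega
  have hw_rep2 : ∀ r, ∃ a b : ℕ, w r = a * d1 + b * d2 := by
    intro r
    obtain ⟨a, b, c, hc⟩ := hw_rep r
    rcases c with _ | c'
    · exact ⟨a, b, by simpa using hc⟩
    · exfalso
      have e : (c' + 1) * d3 = c' * d3 + d3 := by ring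
      apply hw_sub r (by omega)
      exact ⟨a, b, c', by omega⟩
  -- symmetry consequences
  have hsym1 : ∀ r : ℕ, ¬ ∃ a b c : ℕ, (F : ℤ) - w r = a * d1 + b * d2 + c * d3 := by
    intro r
    apply (hsym (w r)).mp
    obtain ⟨a, b, c, hc⟩ := hw_rep r
    exact ⟨a, b, c, by exact_mod_cast hc⟩
  have hrepM : ∀ r : ℕ, ∃ a b c : ℕ, F + d3 - w r = a * d1 + b * d2 + c * d3 := by
    intro r
    have hnr : ¬ ∃ a b c : ℕ, ((w r : ℤ) - d3) = a * d1 + b * d2 + c * d3 := by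
      rintro ⟨a, b, c, hh⟩
      rcases le_or_gt d3 (w r) with h | h
      · apply hw_sub r h
        refine ⟨a, b, c, ?_⟩
        have e : ((w r - d3 : ℕ) : ℤ) = (w r : ℤ) - d3 := by
          push_cast [Nat.cast_sub h]; ring
        exact_mod_cast e ▸ hh
      · have h0 : (0:ℤ) ≤ (a:ℤ) * d1 + b * d2 + c * d3 := by positivity
        have : (w r : ℤ) < d3 := by exact_mod_cast h
        omega
    have hR : ∃ a b c : ℕ, (F : ℤ) - ((w r : ℤ) - d3) = a * d1 + b * d2 + c * d3 := by
      by_contra hc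
      exact hnr ((hsym _).mpr hc)
    obtain ⟨a, b, c, hc⟩ := hR
    refine ⟨a, b, c, ?_⟩
    have e : ((F + d3 - w r : ℕ) : ℤ) = (F : ℤ) - ((w r : ℤ) - d3) := by
      push_cast [Nat.cast_sub (hw_le r)]; ring
    exact_mod_cast e ▸ hc
  have hrepM2 : ∀ r : ℕ, ∃ a b : ℕ, F + d3 - w r = a * d1 + b * d2 := by
    intro r
    obtain ⟨a, b, c, hc⟩ := hrepM r
    rcases c with _ | c'
    · exact ⟨a, b, by simpa using hc⟩
    · exfalso
      apply hsym1 r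
      refine ⟨a, b, c', ?_⟩
      have e : F + d3 - w r = a * d1 + b * d2 + (c' * d3 + d3) := by
        have : (c' + 1) * d3 = c' * d3 + d3 := by ring
        omega
      have hwle := hw_le r
      zify [hwle] at e
      push_cast
      linarith [e]
  -- the W set
  set MM := F + d3 with hMM
  set Wset : Finset ℕ := (Finset.range (MM + 1)).filter
    (fun n => (∃ a b : ℕ, n = a * d1 + b * d2) ∧ (∃ a b : ℕ, MM - n = a * d1 + b * d2)) with hWset
  have hd3W : d3 ≤ Wset.card := by
    have : (Finset.range d3).card = d3 := Finset.card_range d3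
    rw [← this]
    apply Finset.card_le_card_of_injOn w
    · intro r hr
      simp only [hWset, Finset.mem_coe, Finset.mem_filter, Finset.mem_range]
      exact ⟨by have := hw_le r; omega, hw_rep2 r, hrepM2 r⟩
    · intro r1 h1 r2 h2 heq
      simp only [Finset.mem_coe, Finset.mem_range] at h1 h2
      have := hw_mod r1
      rw [heq, hw_mod r2, Nat.mod_eq_of_lt h1, Nat.mod_eq_of_lt h2] at this
      omega
  -- canonical rep of MM
  set g := Nat.gcd d1 d2 with hg
  have hgpos : 0 < g := Nat.gcd_pos_of_pos_left _ (by omega)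
  set m := d1 / g with hm
  set m' := d2 / g with hm'
  have hgm : g * m = d1 := Nat.mul_div_cancel' (Nat.gcd_dvd_left _ _)
  have hgm' : g * m' = d2 := Nat.mul_div_cancel' (Nat.gcd_dvd_right _ _)
  have hmpos : 0 < m := by
    rcases Nat.eq_zero_or_pos m with h | h
    · rw [h, mul_zero] at hgm; omega
    · exact h
  have hcop : Nat.Coprime m m' := Nat.coprime_div_gcd_div_gcd hgpos
  have hmd : m * d2 = m' * d1 := by
    apply Nat.eq_of_mul_eq_mul_left hgpos
    rw [← mul_assoc, hgm, ← mul_assoc, hgm']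
    ring
  have hrepMM : ∃ a b : ℕ, MM = a * d1 + b * d2 := by
    obtain ⟨a, b, c, hc⟩ := hrep_gt MM (by omega)
    rcases c with _ | c'
    · exact ⟨a, b, by simpa using hc⟩
    · exfalso
      apply hFnr
      refine ⟨a, b, c', ?_⟩
      have e : (c' + 1) * d3 = c' * d3 + d3 := by ring
      omega
  obtain ⟨a0, b0, hab0⟩ := hrepMM
  obtain ⟨A0, B0, hB0, hcanMM⟩ := canon_rep d1 d2 m m' hmpos hmd b0 a0
  have hMcan : MM = A0 * d1 + B0 * d2 := by rw [hab0, ← hcanMM]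
  -- counting bound
  have hWb : Wset.card ≤ (A0 + 1) * (B0 + 1) + (A0 + 1 - m') * (m - (B0 + 1)) := by
    apply count_bound d1 d2 m m' A0 B0 MM (by omega) hmpos hmd hcop hB0 hMcan
    intro n hn
    simp only [hWset, Finset.mem_filter, Finset.mem_range] at hn
    exact ⟨by omega, hn.2.1, hn.2.2⟩
  have hd3b : d3 ≤ (A0 + 1) * (B0 + 1) + (A0 + 1 - m') * (m - (B0 + 1)) := le_trans hd3W hWb
  -- arithmetic
  have key : 4 * (d1 * d2 * d3) ≤ (F + d1 + d2 + d3) ^ 2 :=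
    arith_core d1 d2 d3 g m m' A0 B0 F hgpos hmpos hgm hgm' hB0 (by omega) hd3b
  -- real conclusion
  have hsq : Real.sqrt ((d1 : ℝ) * d2 * d3) ≤ ((F : ℝ) + d1 + d2 + d3) / 2 := by
    rw [show ((F : ℝ) + d1 + d2 + d3) / 2
        = Real.sqrt ((((F : ℝ) + d1 + d2 + d3) / 2) ^ 2) from
      (Real.sqrt_sq (by positivity)).symm]
    apply Real.sqrt_le_sqrt
    have keyR : (4 : ℝ) * ((d1:ℝ) * d2 * d3) ≤ ((F:ℝ) + d1 + d2 + d3) ^ 2 := by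
      exact_mod_cast key
    nlinarith [keyR]
  nlinarith [hsq]
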